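/- Define β : Γ × G/N × Ĝ/N⊥ → U(1) by β(a, z, ẑ) := ⟨σ̂(ẑ + χ̂(a)) − σ̂(ẑ) − σ̂(χ̂(a)), σ(z + χ(a))⟩ · ⟨σ̂(ẑ), σ(χ(a))⟩, where the pairings are between Ĝ and G. Then for all a, b ∈ Γ, z ∈ G/N, ẑ ∈ Ĝ/N⊥: β(b, z + χ(a), ẑ + χ̂(a)) · β(ba, z, ẑ)⁻¹ · β(a, z, ẑ) = γ(a,b) · ⟨η̂(a,b), z⟩⁻¹ · ⟨ẑ, η(a,b)⟩. In particular, for each fixed a, b ∈ Γ the function (z, ẑ) ↦ β(b, z + χ(a), ẑ + χ̂(a)) · β(ba, z, ẑ)⁻¹ · β(a, z, ẑ) is continuous on G/N × Ĝ/N⊥, even though σ and σ̂ need not be continuous. -/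

import Mathlib

/-- With Borel (not necessarily continuous) sections `σ : G/N → G` and `σ̂ : Ĝ/N⊥ → Ĝ` of the
quotient maps, define
`β(a, z, ẑ) := ⟨σ̂(ẑ+χ̂(a)) − σ̂(ẑ) − σ̂(χ̂(a)), σ(z+χ(a))⟩ · ⟨σ̂(ẑ), σ(χ(a))⟩`.
Then the group-cohomological coboundary
`(δ_{χ×χ̂}β)(a,b,z,ẑ) = β(b, z+χ(a), ẑ+χ̂(a)) · β(ba, z, ẑ)⁻¹ · β(a, z, ẑ)`
equals `γ(a,b) · ⟨η̂(a,b), z⟩⁻¹ · ⟨ẑ, η(a,b)⟩`, and in particular, for fixed `a, b` it is a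
continuous function of `(z, ẑ) ∈ G/N × Ĝ/N⊥`, although `σ` and `σ̂` need not be
continuous. -/
theorem statement5
    {Γ : Type*} [Group Γ] [Finite Γ]
    {G : Type*} [AddCommGroup G] [TopologicalSpace G] [IsTopologicalAddGroup G]
      [LocallyCompactSpace G] [SecondCountableTopology G] [T2Space G]
    (N : AddSubgroup G) [DiscreteTopology N] [CompactSpace (G ⧸ N)]
    -- the Pontryagin dual of `G`, abstracted by its pairing with `G`
    {Ghat : Type*} [AddCommGroup Ghat] [TopologicalSpace Ghat] [IsTopologicalAddGroup Ghat]
    (e : Ghat → G → Circle)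
    (he₁ : ∀ (x y : Ghat) (g : G), e (x + y) g = e x g * e y g)
    (he₂ : ∀ (x : Ghat) (g h : G), e x (g + h) = e x g * e x h)
    (heCont : ∀ x : Ghat, Continuous (e x))
    (hevCont : ∀ g : G, Continuous fun x : Ghat => e x g)
    -- the annihilator `N⊥` of `N`
    (Nperp : AddSubgroup Ghat)
    (hNperp : ∀ x : Ghat, x ∈ Nperp ↔ ∀ n ∈ N, e x (n : G) = 1)
    -- the well-defined pairing of `Ĝ/N⊥` with `N`
    (eQN : Ghat ⧸ Nperp → N → Circle)
    (heQN : ∀ (x : Ghat) (n : N), eQN (x : Ghat ⧸ Nperp) n = e x (n : G))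
    -- the well-defined pairing of `N⊥` with `G/N`
    (ePQ : Nperp → G ⧸ N → Circle)
    (hePQ : ∀ (p : Nperp) (g : G), ePQ p ((g : G) : G ⧸ N) = e (p : Ghat) g)
    -- the homomorphisms `χ` and `χ̂`
    (χ : Γ → G ⧸ N) (hχ : ∀ a b : Γ, χ (a * b) = χ a + χ b)
    (χhat : Γ → Ghat ⧸ Nperp) (hχhat : ∀ a b : Γ, χhat (a * b) = χhat a + χhat b)
    -- set-theoretic sections `σ` and `σ̂` of the quotient maps
    (σ : G ⧸ N → G) (hσ : ∀ z : G ⧸ N, ((σ z : G) : G ⧸ N) = z)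
    (σh : Ghat ⧸ Nperp → Ghat) (hσh : ∀ zh : Ghat ⧸ Nperp, ((σh zh : Ghat) : Ghat ⧸ Nperp) = zh)
    -- `η(a,b) ∈ N` and `η̂(a,b) ∈ N⊥`
    (hη : ∀ a b : Γ, σ (χ b) - σ (χ (b * a)) + σ (χ a) ∈ N)
    (hηhat : ∀ a b : Γ, σh (χhat b) - σh (χhat (b * a)) + σh (χhat a) ∈ Nperp)
    -- `γ(a,b) := ⟨σ̂(χ̂(a)), σ(χ(b))⟩ · ⟨η̂(a,b), χ(ba)⟩⁻¹`
    (γ : Γ → Γ → Circle)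
    (hγ : ∀ a b : Γ, γ a b = e (σh (χhat a)) (σ (χ b)) *
      (ePQ ⟨σh (χhat b) - σh (χhat (b * a)) + σh (χhat a), hηhat a b⟩ (χ (b * a)))⁻¹)
    -- `β(a, z, ẑ)`
    (β : Γ → G ⧸ N → Ghat ⧸ Nperp → Circle)
    (hβ : ∀ (a : Γ) (z : G ⧸ N) (zh : Ghat ⧸ Nperp),
      β a z zh = e (σh (zh + χhat a) - σh zh - σh (χhat a)) (σ (z + χ a)) *
        e (σh zh) (σ (χ a))) :
    -- the coboundary of `β` decomposes as `γ(a,b) · ⟨η̂(a,b), z⟩⁻¹ · ⟨ẑ, η(a,b)⟩`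
    (∀ (a b : Γ) (z : G ⧸ N) (zh : Ghat ⧸ Nperp),
      β b (z + χ a) (zh + χhat a) * (β (b * a) z zh)⁻¹ * β a z zh =
        γ a b *
          (ePQ ⟨σh (χhat b) - σh (χhat (b * a)) + σh (χhat a), hηhat a b⟩ z)⁻¹ *
          eQN zh ⟨σ (χ b) - σ (χ (b * a)) + σ (χ a), hη a b⟩) ∧
    -- in particular the coboundary of `β` is continuous in `(z, ẑ)`
    (∀ a b : Γ,
      Continuous fun p : (G ⧸ N) × (Ghat ⧸ Nperp) =>
        β b (p.1 + χ a) (p.2 + χhat a) * (β (b * a) p.1 p.2)⁻¹ * β a p.1 p.2) := by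
  -- basic consequences of bilinearity
  have he0 : ∀ g : G, e 0 g = 1 := by
    intro g; have h := he₁ 0 0 g; rw [zero_add] at h; exact left_eq_mul.mp h
  have hg0 : ∀ x : Ghat, e x 0 = 1 := by
    intro x; have h := he₂ x 0 0; rw [zero_add] at h; exact left_eq_mul.mp h
  have hneg1 : ∀ (x : Ghat) (g : G), e (-x) g = (e x g)⁻¹ := by
    intro x g
    have h := he₁ x (-x) g
    rw [add_neg_cancel, he0] at h
    exact (inv_eq_of_mul_eq_one_right h.symm).symm
  have hneg2 : ∀ (x : Ghat) (g : G), e x (-g) = (e x g)⁻¹ := by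
    intro x g
    have h := he₂ x g (-g)
    rw [add_neg_cancel, hg0] at h
    exact (inv_eq_of_mul_eq_one_right h.symm).symm
  -- additive versions
  have hA1 : ∀ (x y : Ghat) (g : G),
      Additive.ofMul (e (x + y) g) = Additive.ofMul (e x g) + Additive.ofMul (e y g) := by
    intro x y g; rw [he₁]; rfl
  have hA2 : ∀ (x : Ghat) (g h : G),
      Additive.ofMul (e x (g + h)) = Additive.ofMul (e x g) + Additive.ofMul (e x h) := by
    intro x g h; rw [he₂]; rfl
  have hAn1 : ∀ (x : Ghat) (g : G),
      Additive.ofMul (e (-x) g) = -Additive.ofMul (e x g) := by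
    intro x g; rw [hneg1]; rfl
  have hAn2 : ∀ (x : Ghat) (g : G),
      Additive.ofMul (e x (-g)) = -Additive.ofMul (e x g) := by
    intro x g; rw [hneg2]; rfl
  -- specialized pairing identities
  have hePQ'' : ∀ (v : Ghat) (hv : v ∈ Nperp) (w : G ⧸ N), ePQ ⟨v, hv⟩ w = e v (σ w) := by
    intro v hv w
    have h := hePQ ⟨v, hv⟩ (σ w)
    rwa [hσ] at h
  have heQN'' : ∀ (w : Ghat ⧸ Nperp) (v : G) (hv : v ∈ N), eQN w ⟨v, hv⟩ = e (σh w) v := by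
    intro w v hv
    have h := heQN (σh w) ⟨v, hv⟩
    rwa [hσh] at h
  -- membership lemmas
  have hmemN : ∀ g : G, ((g : G ⧸ N) = 0) → g ∈ N := fun g h =>
    (QuotientAddGroup.eq_zero_iff g).mp h
  have hmemNp : ∀ x : Ghat, ((x : Ghat ⧸ Nperp) = 0) → x ∈ Nperp := fun x h =>
    (QuotientAddGroup.eq_zero_iff x).mp h
  have hmain : ∀ (a b : Γ) (z : G ⧸ N) (zh : Ghat ⧸ Nperp),
      β b (z + χ a) (zh + χhat a) * (β (b * a) z zh)⁻¹ * β a z zh =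
        γ a b *
          (ePQ ⟨σh (χhat b) - σh (χhat (b * a)) + σh (χhat a), hηhat a b⟩ z)⁻¹ *
          eQN zh ⟨σ (χ b) - σ (χ (b * a)) + σ (χ a), hη a b⟩ := by
    intro a b z zh
    have m1 : σh (zh + χhat a) - σh zh - σh (χhat a) ∈ Nperp := by
      apply hmemNp
      rw [QuotientAddGroup.mk_sub, QuotientAddGroup.mk_sub, hσh, hσh, hσh]
      abel
    have n1 : σ (z + χ (b * a)) - σ (z + χ a) - σ (χ b) ∈ N := by
      apply hmemN
      rw [QuotientAddGroup.mk_sub, QuotientAddGroup.mk_sub, hσ, hσ, hσ, hχ b a]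
      abel
    have n2 : σ (z + χ (b * a)) - σ (χ (b * a)) - σ z ∈ N := by
      apply hmemN
      rw [QuotientAddGroup.mk_sub, QuotientAddGroup.mk_sub, hσ, hσ, hσ]
      abel
    have hk1 : e (σh (zh + χhat a) - σh zh - σh (χhat a))
        (σ (z + χ (b * a)) - σ (z + χ a) - σ (χ b)) = 1 :=
      (hNperp _).mp m1 _ n1
    have hk2 : e (σh (χhat b) - σh (χhat (b * a)) + σh (χhat a))
        (σ (z + χ (b * a)) - σ (χ (b * a)) - σ z) = 1 :=
      (hNperp _).mp (hηhat a b) _ n2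
    have hzc : z + χ a + χ b = z + χ (b * a) := by rw [hχ b a]; abel
    have hzhc : zh + χhat a + χhat b = zh + χhat (b * a) := by rw [hχhat b a]; abel
    simp only [hβ, hγ, hePQ'', heQN'']
    rw [hzc, hzhc]
    refine Additive.ofMul.injective ?_
    have hk1' := congrArg Additive.ofMul hk1
    have hk2' := congrArg Additive.ofMul hk2
    simp only [sub_eq_add_neg, hA1, hA2, hAn1, hAn2, ofMul_one] at hk1' hk2'
    simp only [ofMul_mul, ofMul_inv, sub_eq_add_neg, hA1, hA2, hAn1, hAn2]
    have Hfin : ∀ u v k1 k2 : Additive Circle, k1 = 0 → k2 = 0 → u = v - k1 - k2 → u = v := by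
      intro u v k1 k2 h1 h2 h3
      rw [h1, h2, sub_zero, sub_zero] at h3; exact h3
    exact Hfin _ _ _ _ hk1' hk2' (by abel)
  refine ⟨hmain, ?_⟩
  intro a b
  have hcont1 : Continuous fun w : G ⧸ N =>
      ePQ ⟨σh (χhat b) - σh (χhat (b * a)) + σh (χhat a), hηhat a b⟩ w := by
    rw [(QuotientAddGroup.isQuotientMap_mk N).continuous_iff]
    have : (fun w : G ⧸ N =>
        ePQ ⟨σh (χhat b) - σh (χhat (b * a)) + σh (χhat a), hηhat a b⟩ w) ∘
        (QuotientAddGroup.mk : G → G ⧸ N) =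
        e (σh (χhat b) - σh (χhat (b * a)) + σh (χhat a)) := by
      funext g
      exact hePQ ⟨σh (χhat b) - σh (χhat (b * a)) + σh (χhat a), hηhat a b⟩ g
    rw [this]
    exact heCont _
  have hcont2 : Continuous fun w : Ghat ⧸ Nperp =>
      eQN w ⟨σ (χ b) - σ (χ (b * a)) + σ (χ a), hη a b⟩ := by
    rw [(QuotientAddGroup.isQuotientMap_mk Nperp).continuous_iff]
    have : (fun w : Ghat ⧸ Nperp =>
        eQN w ⟨σ (χ b) - σ (χ (b * a)) + σ (χ a), hη a b⟩) ∘
        (QuotientAddGroup.mk : Ghat → Ghat ⧸ Nperp) =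
        fun x : Ghat => e x (σ (χ b) - σ (χ (b * a)) + σ (χ a)) := by
      funext x
      exact heQN x ⟨σ (χ b) - σ (χ (b * a)) + σ (χ a), hη a b⟩
    rw [this]
    exact hevCont _
  have heq : (fun p : (G ⧸ N) × (Ghat ⧸ Nperp) =>
      β b (p.1 + χ a) (p.2 + χhat a) * (β (b * a) p.1 p.2)⁻¹ * β a p.1 p.2) =
      fun p => γ a b *
        (ePQ ⟨σh (χhat b) - σh (χhat (b * a)) + σh (χhat a), hηhat a b⟩ p.1)⁻¹ *
        eQN p.2 ⟨σ (χ b) - σ (χ (b * a)) + σ (χ a), hη a b⟩ :=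
    funext fun p => hmain a b p.1 p.2
  rw [heq]
  exact (continuous_const.mul ((hcont1.comp continuous_fst).inv)).mul
    (hcont2.comp continuous_snd)
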